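/- Let {H_iα_i}_{i=1}^s be a coset partition of F_n with periods h_i of the Schreier-graph transition matrices of the H_i. If some h_ℓ > 1 does not properly divide any other period h_i, then there exists j ≠ ℓ with h_j = h_ℓ. -/

import Mathlib

open Finset

namespace NPR

variable {S : Type*} [Fintype S] [DecidableEq S] {n : ℕ}

/-- transition count matrix of a deterministic automaton -/
def Bmat (σ : Fin n → S → S) : Matrix S S ℕ :=
  fun u v => #(univ.filter (fun a => σ a u = v))

/-- number of words of length m from u to v -/
def cnt (σ : Fin n → S → S) (m : ℕ) (u v : S) : ℕ := ((Bmat σ) ^ m) u v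

variable (σ : Fin n → S → S)

lemma cnt_zero (u v : S) : cnt σ 0 u v = if u = v then 1 else 0 := by
  simp [cnt, Matrix.one_apply]

lemma cnt_zero_self (u : S) : cnt σ 0 u u = 1 := by simp [cnt_zero]

lemma cnt_add (m m' : ℕ) (u w : S) :
    cnt σ (m + m') u w = ∑ v : S, cnt σ m u v * cnt σ m' v w := by
  simp [cnt, pow_add, Matrix.mul_apply]

lemma cnt_succ_left (m : ℕ) (u w : S) :
    cnt σ (m + 1) u w = ∑ v : S, Bmat σ u v * cnt σ m v w := by
  have : cnt σ (m+1) u w = cnt σ (1 + m) u w := by rw [add_comm]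
  rw [this, cnt_add]
  congr 1; ext v; congr 1
  simp [cnt, pow_one]

lemma cnt_one (u v : S) : cnt σ 1 u v = Bmat σ u v := by simp [cnt, pow_one]

lemma Bmat_row_sum (u : S) : ∑ v : S, Bmat σ u v = n := by
  classical
  have := Finset.card_eq_sum_card_fiberwise
    (f := fun a : Fin n => σ a u) (s := univ) (t := univ) (by simp)
  simpa [Bmat] using this.symm

lemma cnt_row_sum (m : ℕ) (u : S) : ∑ v : S, cnt σ m u v = n ^ m := by
  induction m generalizing u with
  | zero => simp [cnt_zero]
  | succ m ih =>
    have : ∀ v, cnt σ (m+1) u v = ∑ w : S, Bmat σ u w * cnt σ m w v :=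
      fun v => cnt_succ_left σ m u v
    rw [Finset.sum_congr rfl (fun v _ => this v), Finset.sum_comm]
    have h1 : ∑ w : S, ∑ v : S, Bmat σ u w * cnt σ m w v
        = ∑ w : S, Bmat σ u w * n ^ m := by
      refine Finset.sum_congr rfl (fun w _ => ?_)
      rw [← Finset.mul_sum, ih w]
    rw [h1, ← Finset.sum_mul, Bmat_row_sum]; ring

lemma cnt_le (m : ℕ) (u v : S) : cnt σ m u v ≤ n ^ m := by
  have h := cnt_row_sum σ m u
  have h2 : cnt σ m u v ≤ ∑ w : S, cnt σ m u w :=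
    Finset.single_le_sum (fun w _ => Nat.zero_le _) (mem_univ v)
  omega

lemma cnt_mul_le (m m' : ℕ) (u v w : S) :
    cnt σ m u v * cnt σ m' v w ≤ cnt σ (m + m') u w := by
  rw [cnt_add]
  exact Finset.single_le_sum (f := fun v => cnt σ m u v * cnt σ m' v w)
    (fun x _ => Nat.zero_le _) (mem_univ v)

lemma cnt_pos_trans {m m' : ℕ} {u v w : S} (h1 : 0 < cnt σ m u v)
    (h2 : 0 < cnt σ m' v w) : 0 < cnt σ (m + m') u w :=
  lt_of_lt_of_le (Nat.mul_pos h1 h2) (cnt_mul_le σ m m' u v w)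

lemma cnt_one_pos (a : Fin n) (u : S) : 0 < cnt σ 1 u (σ a u) := by
  rw [cnt_one]
  exact Finset.card_pos.2 ⟨a, by simp⟩

/-- run a word -/
def runw (u : S) (l : List (Fin n)) : S := l.foldl (fun x a => σ a x) u

lemma runw_nil (u : S) : runw σ u [] = u := rfl

lemma runw_cons (u : S) (a : Fin n) (l : List (Fin n)) :
    runw σ u (a :: l) = runw σ (σ a u) l := rfl

lemma cnt_words (m : ℕ) (u v : S) :
    cnt σ m u v = #(univ.filter (fun w : Fin m → Fin n => runw σ u (List.ofFn w) = v)) := by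
  induction m generalizing u with
  | zero =>
    rw [cnt_zero]
    by_cases h : u = v <;> simp [h, runw, List.ofFn_zero, Finset.filter_true_of_mem,
      Finset.filter_false_of_mem]
  | succ m ih =>
    rw [cnt_succ_left]
    -- card via equiv to sigma type
    have hcard : #(univ.filter (fun w : Fin (m+1) → Fin n => runw σ u (List.ofFn w) = v))
        = ∑ a : Fin n, #(univ.filter (fun w : Fin m → Fin n => runw σ (σ a u) (List.ofFn w) = v)) := by
      rw [← Fintype.card_subtype]
      have e : {w : Fin (m+1) → Fin n // runw σ u (List.ofFn w) = v}
          ≃ Σ a : Fin n, {w : Fin m → Fin n // runw σ (σ a u) (List.ofFn w) = v} :=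
        { toFun := fun ⟨w, hw⟩ => ⟨w 0, ⟨Fin.tail w, by
            rw [List.ofFn_succ] at hw
            exact hw⟩⟩
          invFun := fun ⟨a, ⟨w', hw'⟩⟩ => ⟨Fin.cons a w', by
            rw [List.ofFn_succ]
            simpa [runw_cons] using hw'⟩
          left_inv := fun ⟨w, hw⟩ => by
            ext i
            simp [Fin.cons_self_tail]
          right_inv := fun ⟨a, ⟨w', hw'⟩⟩ => by
            simp [Fin.tail_cons]
            exact HEq.rfl }
      rw [Fintype.card_congr e, Fintype.card_sigma]
      refine Finset.sum_congr rfl (fun a _ => ?_)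
      rw [Fintype.card_subtype]
    rw [hcard]
    have e1 : ∑ a : Fin n, #(univ.filter (fun w : Fin m → Fin n => runw σ (σ a u) (List.ofFn w) = v))
        = ∑ a : Fin n, cnt σ m (σ a u) v := by
      refine Finset.sum_congr rfl (fun a _ => ?_); rw [ih]
    rw [e1]
    classical
    rw [← Finset.sum_fiberwise (s := univ) (g := fun a : Fin n => σ a u)
      (f := fun a => cnt σ m (σ a u) v)]
    refine (Finset.sum_congr rfl (fun w _ => ?_)).symm
    have e2 : ∑ a ∈ univ.filter (fun a => σ a u = w), cnt σ m (σ a u) v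
        = ∑ _a ∈ univ.filter (fun a => σ a u = w), cnt σ m w v := by
      refine Finset.sum_congr rfl (fun a ha => ?_)
      rw [(Finset.mem_filter.1 ha).2]
    rw [e2, Bmat, Finset.sum_const, smul_eq_mul, mul_comm]


lemma mult_mem {R : Set ℕ} (hadd : ∀ {a b : ℕ}, a ∈ R → b ∈ R → a + b ∈ R)
    {m : ℕ} (hm : m ∈ R) : ∀ k, 1 ≤ k → k * m ∈ R := by
  intro k hk
  induction k with
  | zero => omega
  | succ k ih =>
    rcases Nat.eq_or_lt_of_le hk with h | h
    · simpa [← h] using hm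
    · have : k * m ∈ R := ih (by omega)
      have := hadd this hm
      simpa [Nat.succ_mul] using this

lemma eventually_mult (R : Set ℕ) (hne : ∃ m, m ∈ R) (hpos : ∀ m ∈ R, 0 < m)
    (hadd : ∀ {a b : ℕ}, a ∈ R → b ∈ R → a + b ∈ R)
    (h : ℕ) (hdvd : ∀ m ∈ R, h ∣ m) (hgcd : ∀ e : ℕ, (∀ m ∈ R, e ∣ m) → e ∣ h) :
    ∃ M0 : ℕ, 1 ≤ M0 ∧ ∀ k, M0 ≤ k → k * h ∈ R := by
  obtain ⟨m0, hm0⟩ := hne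
  have hm0pos : 0 < m0 := hpos _ hm0
  have hh : 0 < h := by
    rcases Nat.eq_zero_or_pos h with h0 | h0
    · rcases hdvd _ hm0 with ⟨c, hc⟩
      rw [h0] at hc; simp at hc; omega
    · exact h0
  -- the "difference set"
  set K : Set ℕ := {z : ℕ | ∃ P Q : ℕ, (P ∈ R ∨ P = 0) ∧ (Q ∈ R ∨ Q = 0) ∧ z + Q = P}
    with hK
  have hmem0 : ∀ {a b : ℕ}, (a ∈ R ∨ a = 0) → (b ∈ R ∨ b = 0) → (a + b ∈ R ∨ a + b = 0) := by
    rintro a b (ha | ha) (hb | hb)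
    · exact Or.inl (hadd ha hb)
    · subst hb; simpa using Or.inl ha
    · subst ha; simpa using Or.inl hb
    · subst ha; subst hb; simp
  have hRK : ∀ m ∈ R, m ∈ K := fun m hm => ⟨m, 0, Or.inl hm, Or.inr rfl, by ring⟩
  have hK0 : (0:ℕ) ∈ K := ⟨0, 0, Or.inr rfl, Or.inr rfl, rfl⟩
  have hKadd : ∀ {z z' : ℕ}, z ∈ K → z' ∈ K → z + z' ∈ K := by
    rintro z z' ⟨P, Q, hP, hQ, hz⟩ ⟨P', Q', hP', hQ', hz'⟩
    exact ⟨P + P', Q + Q', hmem0 hP hP', hmem0 hQ hQ', by omega⟩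
  have hKsub : ∀ {z z' : ℕ}, z ∈ K → z' ∈ K → z' ≤ z → z - z' ∈ K := by
    rintro z z' ⟨P, Q, hP, hQ, hz⟩ ⟨P', Q', hP', hQ', hz'⟩ hle
    exact ⟨P + Q', Q + P', hmem0 hP hQ', hmem0 hQ hP', by omega⟩
  have hKmul : ∀ (q : ℕ) {z : ℕ}, z ∈ K → q * z ∈ K := by
    intro q z hz
    induction q with
    | zero => simpa using hK0
    | succ q ih => rw [Nat.succ_mul]; exact hKadd ih hz
  -- least positive element of K
  set Kp : Set ℕ := {z : ℕ | z ∈ K ∧ 0 < z} with hKp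
  have hKpne : Kp.Nonempty := ⟨m0, hRK _ hm0, hm0pos⟩
  set dd := sInf Kp with hdd
  have hddmem : dd ∈ Kp := Nat.sInf_mem hKpne
  have hddpos : 0 < dd := hddmem.2
  -- dd divides every element of R
  have hdddvd : ∀ m ∈ R, dd ∣ m := by
    intro m hm
    have hmad : m % dd + m / dd * dd = m := Nat.mod_add_div' m dd
    have hmod : m % dd ∈ K := by
      have h1 : (m / dd) * dd ∈ K := hKmul _ hddmem.1
      have h2 : (m / dd) * dd ≤ m := Nat.div_mul_le_self m dd
      have h3 := hKsub (hRK _ hm) h1 h2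
      have heq : m - m / dd * dd = m % dd := by omega
      rwa [heq] at h3
    by_contra hnd
    have hmodpos : 0 < m % dd := by
      rcases Nat.eq_zero_or_pos (m % dd) with h0 | h0
      · exact absurd (Nat.dvd_of_mod_eq_zero h0) hnd
      · exact h0
    have hge : dd ≤ m % dd := Nat.sInf_le ⟨hmod, hmodpos⟩
    have hlt : m % dd < dd := Nat.mod_lt _ hddpos
    omega
  have hddh : dd ∣ h := hgcd _ hdddvd
  have hhdd : h ∣ dd := by
    obtain ⟨P, Q, hP, hQ, hz⟩ := hddmem.1
    have hP' : h ∣ P := by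
      rcases hP with hP | hP
      · exact hdvd _ hP
      · rw [hP]; exact dvd_zero h
    have hQ' : h ∣ Q := by
      rcases hQ with hQ | hQ
      · exact hdvd _ hQ
      · rw [hQ]; exact dvd_zero h
    have : dd = P - Q := by omega
    rw [this]; exact Nat.dvd_sub hP' hQ'
  have hdh : dd = h := Nat.dvd_antisymm hddh hhdd
  -- so h = P - Q with P Q ∈ R ∪ {0}
  obtain ⟨P, Q, hP, hQ, hz⟩ := hddmem.1
  rw [hdh] at hz
  rcases hQ with hQ | hQ
  · -- Q ∈ R : P = Q + h,  Q = A*h, P = (A+1)*h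
    have hPR : P ∈ R := by
      rcases hP with hP | hP
      · exact hP
      · exfalso; have := hpos _ hQ; omega
    obtain ⟨A, hA⟩ := hdvd _ hQ
    have hApos : 1 ≤ A := by
      have := hpos _ hQ
      rcases Nat.eq_zero_or_pos A with h0 | h0
      · rw [h0] at hA; omega
      · exact h0
    have hPA : P = (A + 1) * h := by
      have hr : (A + 1) * h = h * A + h := by ring
      rw [hA] at hz; omega
    refine ⟨A * A + A, by nlinarith, ?_⟩
    intro k hk
    -- write k = x*A + y*(A+1) with x ≥ 1, y < A
    set y := k % A with hy
    set q := k / A with hq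
    have hyA : y < A := Nat.mod_lt _ (by omega)
    have hkqy : k = q * A + y := by
      rw [hq, hy]
      have := Nat.mod_add_div' k A
      omega
    have hqA : A + 1 ≤ q := by
      have h1 : (A * A + A) / A ≤ q := Nat.div_le_div_right hk
      have h2 : (A * A + A) / A = A + 1 := by
        rw [show A * A + A = (A + 1) * A by ring]
        exact Nat.mul_div_cancel _ (by omega)
      omega
    set x := q - y with hx
    have hxpos : 1 ≤ x := by omega
    have hrep : k = x * A + y * (A + 1) := by
      have h5 : x * A = q * A - y * A := Nat.sub_mul q y A
      have h6 : y * (A + 1) = y * A + y := by ring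
      have h7 : y * A ≤ q * A := Nat.mul_le_mul_right A (by omega)
      omega
    have hkh : k * h = x * Q + y * P := by
      rw [hA, hPA, hrep]; ring
    rw [hkh]
    have hxQ : x * Q ∈ R := mult_mem hadd hQ x hxpos
    rcases Nat.eq_zero_or_pos y with hy0 | hy0
    · simpa [hy0] using hxQ
    · exact hadd hxQ (mult_mem hadd hPR y hy0)
  · -- Q = 0 : h ∈ R
    subst hQ
    have hPh : P = h := by omega
    have hhR : h ∈ R := by
      rcases hP with hP | hP
      · rwa [hPh] at hP
      · omega
    exact ⟨1, le_refl 1, fun k hk => mult_mem hadd hhR k hk⟩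


set_option maxHeartbeats 1600000 in
theorem block_main {S : Type*} [Fintype S] [DecidableEq S] {n : ℕ}
    (σ : Fin n → S → S) (hn : 1 ≤ n)
    (hreach : ∀ u v : S, ∃ m, 0 < cnt σ m u v)
    (b t : S) (h : ℕ)
    (hdvd : ∀ m, 0 < m → 0 < cnt σ m b b → h ∣ m)
    (hgcd : ∀ e : ℕ, (∀ m, 0 < m → 0 < cnt σ m b b → e ∣ m) → e ∣ h) :
    ∃ (r : ℕ) (δ : ℚ), 0 < δ ∧
      (∀ m, ¬ m ≡ r [MOD h] → cnt σ m b t = 0) ∧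
      ∀ ε : ℚ, 0 < ε → ∃ T, ∀ m m', T ≤ m → T ≤ m' →
        m ≡ r [MOD h] → m' ≡ r [MOD h] →
        δ ≤ (cnt σ m b t : ℚ) / (n:ℚ) ^ m ∧
        |(cnt σ m b t : ℚ) / (n:ℚ) ^ m - (cnt σ m' b t : ℚ) / (n:ℚ) ^ m'| ≤ ε := by
  classical
  set a0 : Fin n := ⟨0, hn⟩ with ha0
  -- a positive return time at b
  obtain ⟨m2, hm2⟩ := hreach (σ a0 b) b
  set s0 := 1 + m2 with hs0def
  have hs0 : 0 < cnt σ s0 b b := cnt_pos_trans σ (cnt_one_pos σ a0 b) hm2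
  have hs0pos : 0 < s0 := by omega
  have hh : 0 < h := by
    rcases Nat.eq_zero_or_pos h with h0 | h0
    · obtain ⟨c, hc⟩ := hdvd s0 hs0pos hs0
      rw [h0] at hc; simp at hc; omega
    · exact h0
  -- eventually all multiples of h are return times
  obtain ⟨M0, hM01, hM0⟩ := eventually_mult {m : ℕ | 0 < m ∧ 0 < cnt σ m b b}
    ⟨s0, hs0pos, hs0⟩ (fun m hm => hm.1)
    (by
      rintro x y ⟨hx1, hx2⟩ ⟨hy1, hy2⟩
      exact ⟨by omega, cnt_pos_trans σ hx2 hy2⟩)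
    h (fun m hm => hdvd m hm.1 hm.2)
    (fun e he => hgcd e (fun m hm1 hm2 => he m ⟨hm1, hm2⟩))
  -- any two travel times between the same pair are congruent mod h
  have hcong : ∀ u v m m', 0 < cnt σ m u v → 0 < cnt σ m' u v → m ≡ m' [MOD h] := by
    intro u v m m' hm hm'
    obtain ⟨p, hp⟩ := hreach b u
    obtain ⟨k, hk⟩ := hreach v b
    have hX : 0 < cnt σ (p + m + k + s0) b b :=
      cnt_pos_trans σ (cnt_pos_trans σ (cnt_pos_trans σ hp hm) hk) hs0
    have hX' : 0 < cnt σ (p + m' + k + s0) b b :=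
      cnt_pos_trans σ (cnt_pos_trans σ (cnt_pos_trans σ hp hm') hk) hs0
    have d1 : h ∣ (p + m + k + s0) := hdvd _ (by omega) hX
    have d2 : h ∣ (p + m' + k + s0) := hdvd _ (by omega) hX'
    have e1 : m + (p + k + s0) ≡ 0 [MOD h] := by
      rw [Nat.modEq_zero_iff_dvd]
      have : m + (p + k + s0) = p + m + k + s0 := by omega
      rwa [this]
    have e2 : m' + (p + k + s0) ≡ 0 [MOD h] := by
      rw [Nat.modEq_zero_iff_dvd]
      have : m' + (p + k + s0) = p + m' + k + s0 := by omega
      rwa [this]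
    exact Nat.ModEq.add_right_cancel' _ (e1.trans e2.symm)
  -- the class of b
  set InC0 : S → Prop := fun u => ∃ p, 0 < cnt σ p b u ∧ h ∣ p with hInC0
  have hbC0 : InC0 b := ⟨0, by rw [cnt_zero_self]; omega, dvd_zero h⟩
  have hstep0 : ∀ u v k, InC0 u → 0 < cnt σ (k * h) u v → InC0 v := by
    rintro u v k ⟨p, hp, hpd⟩ hkv
    exact ⟨p + k * h, cnt_pos_trans σ hp hkv, Nat.dvd_add hpd (dvd_mul_left h k)⟩
  have hclassdvd : ∀ u v m, InC0 u → InC0 v → 0 < cnt σ m u v → h ∣ m := by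
    rintro u v m ⟨p, hp, hpd⟩ ⟨q, hq, hqd⟩ hm
    have h1 : 0 < cnt σ (p + m) b v := cnt_pos_trans σ hp hm
    have h2 : p + m ≡ q [MOD h] := hcong b v _ _ h1 hq
    have h3 : h ∣ (p + m) := by
      have : p + m ≡ 0 [MOD h] := h2.trans (Nat.modEq_zero_iff_dvd.2 hqd)
      exact Nat.modEq_zero_iff_dvd.1 this
    exact (Nat.dvd_add_right hpd).1 h3
  -- the residue r of travel times b → t
  have htne : {m : ℕ | 0 < cnt σ m b t}.Nonempty := hreach b t
  set mstar := sInf {m : ℕ | 0 < cnt σ m b t} with hmstar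
  have hms : 0 < cnt σ mstar b t := Nat.sInf_mem htne
  set r := mstar % h with hrdef
  have hrlt : r < h := Nat.mod_lt _ hh
  have hsupp : ∀ m, 0 < cnt σ m b t → m ≡ r [MOD h] := by
    intro m hm
    exact (hcong b t m mstar hm hms).trans (Nat.mod_modEq mstar h).symm
  have hsupp0 : ∀ m, ¬ m ≡ r [MOD h] → cnt σ m b t = 0 := by
    intro m hm
    by_contra hc0
    exact hm (hsupp m (Nat.pos_of_ne_zero hc0))
  -- travel times from class-0 states to t are ≡ r
  have hsuppu : ∀ u m, InC0 u → 0 < cnt σ m u t → m ≡ r [MOD h] := by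
    rintro u m ⟨p, hp, hpd⟩ hm
    have h1 : 0 < cnt σ (p + m) b t := cnt_pos_trans σ hp hm
    have h2 : p + m ≡ r [MOD h] := hsupp _ h1
    have h3 : p + m ≡ 0 + m [MOD h] :=
      Nat.ModEq.add_right m (Nat.modEq_zero_iff_dvd.2 hpd)
    simpa using h3.symm.trans h2
  -- uniform primitivity on the class of b
  have hprim : ∃ K, 1 ≤ K ∧ ∀ u v, InC0 u → InC0 v → 0 < cnt σ (K * h) u v := by
    have key : ∀ uv : S × S, ∃ Kp : ℕ, ∀ k, Kp ≤ k →
        InC0 uv.1 → InC0 uv.2 → 0 < cnt σ (k * h) uv.1 uv.2 := by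
      rintro ⟨u, v⟩
      by_cases hu : InC0 u
      · by_cases hv : InC0 v
        · obtain ⟨q, hq⟩ := hreach u b
          have hqd : h ∣ q := by
            rcases Nat.eq_zero_or_pos q with h0 | h0
            · rw [h0]; exact dvd_zero h
            · obtain ⟨p, hp, hpd⟩ := hu
              have : h ∣ p + q := hdvd _ (by omega) (cnt_pos_trans σ hp hq)
              exact (Nat.dvd_add_right hpd).1 this
          obtain ⟨q', hq'⟩ := hqd
          obtain ⟨p2, hp2, hp2d⟩ := hv
          obtain ⟨p2', hp2'⟩ := hp2d
          refine ⟨q' + M0 + p2', fun k hk _ _ => ?_⟩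
          set j := k - q' - p2' with hj
          have hjM : M0 ≤ j := by omega
          have hjh : 0 < cnt σ (j * h) b b := (hM0 j hjM).2
          have heq : k * h = q + (j * h + p2) := by
            rw [hq', hp2']
            have hkk : k = q' + (j + p2') := by omega
            rw [hkk]; ring
          rw [heq]
          exact cnt_pos_trans σ hq (cnt_pos_trans σ hjh hp2)
        · exact ⟨0, fun k _ _ hv' => absurd hv' hv⟩
      · exact ⟨0, fun k _ hu' _ => absurd hu' hu⟩
    choose F hF using key
    refine ⟨(univ.sup F) + 1, by omega, fun u v hu hv => ?_⟩
    exact hF (u, v) _ (le_trans (Finset.le_sup (mem_univ (u,v))) (by omega)) hu hv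
  obtain ⟨K, hK1, hKprim⟩ := hprim
  -- finset of class-0 states
  set C0f : Finset S := univ.filter (fun u => InC0 u) with hC0f
  have hbC0f : b ∈ C0f := by rw [hC0f]; simp [hbC0]
  have hne' : C0f.Nonempty := ⟨b, hbC0f⟩
  have hmemC0 : ∀ {u}, u ∈ C0f → InC0 u := by
    intro u hu; rw [hC0f] at hu; exact (Finset.mem_filter.1 hu).2
  -- the normalized counts
  have hnQ : (0:ℚ) < (n:ℚ) := by exact_mod_cast hn
  have hnp : ∀ m : ℕ, (0:ℚ) < (n:ℚ) ^ m := fun m => pow_pos hnQ m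
  set f : ℕ → S → ℚ := fun k u => (cnt σ (r + k * h) u t : ℚ) / (n:ℚ) ^ (r + k * h)
    with hf
  have hf0 : ∀ k u, 0 ≤ f k u := fun k u =>
    div_nonneg (by positivity) (le_of_lt (hnp _))
  have hf1 : ∀ k u, f k u ≤ 1 := by
    intro k u
    rw [hf]
    rw [div_le_one (hnp _)]
    exact_mod_cast cnt_le σ _ u t
  set W : ℕ → S → S → ℚ := fun j u v => (cnt σ (j * h) u v : ℚ) / (n:ℚ) ^ (j * h)
    with hW
  have hW0 : ∀ j u v, 0 ≤ W j u v := fun j u v =>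
    div_nonneg (by positivity) (le_of_lt (hnp _))
  -- decomposition
  have hdec : ∀ j k u, InC0 u →
      f (k + j) u = ∑ v ∈ C0f, W j u v * f k v := by
    intro j k u hu
    have harg : r + (k + j) * h = j * h + (r + k * h) := by ring
    have h1 : cnt σ (r + (k + j) * h) u t
        = ∑ v : S, cnt σ (j * h) u v * cnt σ (r + k * h) v t := by
      rw [harg, cnt_add]
    have h2 : ∑ v ∈ C0f, cnt σ (j * h) u v * cnt σ (r + k * h) v t
        = ∑ v : S, cnt σ (j * h) u v * cnt σ (r + k * h) v t := by
      refine Finset.sum_subset (Finset.subset_univ _) ?_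
      intro v _ hv
      rcases Nat.eq_zero_or_pos (cnt σ (j * h) u v) with h0 | h0
      · rw [h0, zero_mul]
      · exfalso
        exact hv (by rw [hC0f]; simp [hstep0 u v j hu h0])
    rw [hf]
    simp only
    rw [h1, ← h2]
    push_cast
    rw [Finset.sum_div]
    refine Finset.sum_congr rfl (fun v _ => ?_)
    rw [harg, pow_add, div_mul_div_comm]
  -- weights sum to 1 on the class
  have hWsum : ∀ j u, InC0 u → ∑ v ∈ C0f, W j u v = 1 := by
    intro j u hu
    have h2 : ∑ v ∈ C0f, cnt σ (j * h) u v = ∑ v : S, cnt σ (j * h) u v := by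
      refine Finset.sum_subset (Finset.subset_univ _) ?_
      intro v _ hv
      rcases Nat.eq_zero_or_pos (cnt σ (j * h) u v) with h0 | h0
      · exact h0
      · exact absurd (by rw [hC0f]; simp [hstep0 u v j hu h0]) hv
    rw [hW]
    simp only
    rw [← Finset.sum_div]
    rw [div_eq_one_iff_eq (ne_of_gt (hnp _))]
    push_cast [h2]
    exact_mod_cast congrArg (Nat.cast : ℕ → ℚ) (by
      rw [h2]; exact cnt_row_sum σ (j * h) u)
  -- sup and inf over the class
  set Mx : ℕ → ℚ := fun k => C0f.sup' hne' (f k) with hMx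
  set mn : ℕ → ℚ := fun k => C0f.inf' hne' (f k) with hmn
  have hfMx : ∀ k u, u ∈ C0f → f k u ≤ Mx k := fun k u hu => Finset.le_sup' (f k) hu
  have hmnf : ∀ k u, u ∈ C0f → mn k ≤ f k u := fun k u hu => Finset.inf'_le (f k) hu
  have hMx1 : ∀ k, Mx k ≤ 1 := fun k => Finset.sup'_le _ _ (fun u _ => hf1 k u)
  have hmn0 : ∀ k, 0 ≤ mn k := fun k => Finset.le_inf' _ _ (fun u _ => hf0 k u)
  have hmnMx : ∀ k, mn k ≤ mn k := fun k => le_refl _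
  have hDnn : ∀ k, mn k ≤ Mx k := fun k => le_trans (hmnf k b hbC0f) (hfMx k b hbC0f)
  -- one-step monotonicity
  have hconv_ub : ∀ j k u, u ∈ C0f → f (k + j) u ≤ Mx k := by
    intro j k u hu
    rw [hdec j k u (hmemC0 hu)]
    calc ∑ v ∈ C0f, W j u v * f k v
        ≤ ∑ v ∈ C0f, W j u v * Mx k := by
          refine Finset.sum_le_sum (fun v hv => ?_)
          exact mul_le_mul_of_nonneg_left (hfMx k v hv) (hW0 j u v)
      _ = Mx k := by rw [← Finset.sum_mul, hWsum j u (hmemC0 hu), one_mul]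
  have hconv_lb : ∀ j k u, u ∈ C0f → mn k ≤ f (k + j) u := by
    intro j k u hu
    rw [hdec j k u (hmemC0 hu)]
    calc mn k = ∑ v ∈ C0f, W j u v * mn k := by
          rw [← Finset.sum_mul, hWsum j u (hmemC0 hu), one_mul]
      _ ≤ ∑ v ∈ C0f, W j u v * f k v := by
          refine Finset.sum_le_sum (fun v hv => ?_)
          exact mul_le_mul_of_nonneg_left (hmnf k v hv) (hW0 j u v)
  have hMxmono : ∀ j k, Mx (k + j) ≤ Mx k := fun j k =>
    Finset.sup'_le _ _ (fun u hu => hconv_ub j k u hu)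
  have hmnmono : ∀ j k, mn k ≤ mn (k + j) := fun j k =>
    Finset.le_inf' _ _ (fun u hu => hconv_lb j k u hu)
  -- the contraction coefficient
  have hprodne : (C0f ×ˢ C0f).Nonempty := hne'.product hne'
  set δw : ℚ := (C0f ×ˢ C0f).inf' hprodne (fun uv => W K uv.1 uv.2) with hδw
  have hδpos : 0 < δw := by
    obtain ⟨uv, huv, heq⟩ := Finset.exists_mem_eq_inf' hprodne (fun uv => W K uv.1 uv.2)
    rw [hδw, heq]
    rcases Finset.mem_product.1 huv with ⟨hu, hv⟩
    have := hKprim uv.1 uv.2 (hmemC0 hu) (hmemC0 hv)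
    rw [hW]
    apply div_pos _ (hnp _)
    exact_mod_cast this
  have hδle : ∀ u v, u ∈ C0f → v ∈ C0f → δw ≤ W K u v := by
    intro u v hu hv
    rw [hδw]
    exact Finset.inf'_le (b := (u, v)) _ (Finset.mem_product.2 ⟨hu, hv⟩)
  have hδ1 : δw ≤ 1 := by
    refine le_trans (hδle b b hbC0f hbC0f) ?_
    rw [hW]
    rw [div_le_one (hnp _)]
    exact_mod_cast cnt_le σ _ b b
  -- contraction estimates
  have hcontr_ub : ∀ k, Mx (k + K) ≤ Mx k - δw * (Mx k - mn k) := by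
    intro k
    refine Finset.sup'_le _ _ (fun u hu => ?_)
    obtain ⟨v0, hv0mem, hv0⟩ := Finset.exists_mem_eq_inf' hne' (f k)
    have hWs := hWsum K u (hmemC0 hu)
    have hsplit : ∑ v ∈ C0f, W K u v * f k v
        = W K u v0 * f k v0 + ∑ v ∈ C0f.erase v0, W K u v * f k v :=
      (Finset.add_sum_erase C0f _ hv0mem).symm
    have hWsplit : ∑ v ∈ C0f.erase v0, W K u v = 1 - W K u v0 := by
      have := Finset.add_sum_erase C0f (fun v => W K u v) hv0mem
      rw [hWs] at this; linarith
    have hbound : ∑ v ∈ C0f.erase v0, W K u v * f k v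
        ≤ (1 - W K u v0) * Mx k := by
      rw [← hWsplit, Finset.sum_mul]
      refine Finset.sum_le_sum (fun v hv => ?_)
      exact mul_le_mul_of_nonneg_left (hfMx k v (Finset.mem_of_mem_erase hv))
        (hW0 K u v)
    have hfv0 : f k v0 = mn k := hv0.symm
    rw [hdec K k u (hmemC0 hu), hsplit, hfv0]
    have hWv0 : δw ≤ W K u v0 := hδle u v0 hu hv0mem
    have hd : mn k ≤ Mx k := hDnn k
    nlinarith [hW0 K u v0]
  have hcontr_lb : ∀ k, mn k + δw * (Mx k - mn k) ≤ mn (k + K) := by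
    intro k
    refine Finset.le_inf' _ _ (fun u hu => ?_)
    obtain ⟨v0, hv0mem, hv0⟩ := Finset.exists_mem_eq_sup' hne' (f k)
    have hWs := hWsum K u (hmemC0 hu)
    have hsplit : ∑ v ∈ C0f, W K u v * f k v
        = W K u v0 * f k v0 + ∑ v ∈ C0f.erase v0, W K u v * f k v :=
      (Finset.add_sum_erase C0f _ hv0mem).symm
    have hWsplit : ∑ v ∈ C0f.erase v0, W K u v = 1 - W K u v0 := by
      have := Finset.add_sum_erase C0f (fun v => W K u v) hv0mem
      rw [hWs] at this; linarith
    have hbound : (1 - W K u v0) * mn k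
        ≤ ∑ v ∈ C0f.erase v0, W K u v * f k v := by
      rw [← hWsplit, Finset.sum_mul]
      refine Finset.sum_le_sum (fun v hv => ?_)
      exact mul_le_mul_of_nonneg_left (hmnf k v (Finset.mem_of_mem_erase hv))
        (hW0 K u v)
    have hfv0 : f k v0 = Mx k := hv0.symm
    rw [hdec K k u (hmemC0 hu), hsplit, hfv0]
    have hWv0 : δw ≤ W K u v0 := hδle u v0 hu hv0mem
    have hd : mn k ≤ Mx k := hDnn k
    nlinarith [hW0 K u v0]
  have hcontr : ∀ k, Mx (k + K) - mn (k + K) ≤ (1 - δw) * (Mx k - mn k) := by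
    intro k
    have h1 := hcontr_ub k
    have h2 := hcontr_lb k
    have hd : mn k ≤ Mx k := hDnn k
    have h3 : 0 ≤ δw * (Mx k - mn k) := mul_nonneg (le_of_lt hδpos) (by linarith)
    nlinarith
  -- geometric decay
  have hgeo : ∀ j, Mx (j * K) - mn (j * K) ≤ (1 - δw) ^ j := by
    intro j
    induction j with
    | zero =>
      simp only [Nat.zero_mul, pow_zero]
      have := hMx1 0; have := hmn0 0; linarith
    | succ j ih =>
      have harg : (j + 1) * K = j * K + K := by ring
      rw [harg, pow_succ]
      calc Mx (j * K + K) - mn (j * K + K)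
          ≤ (1 - δw) * (Mx (j * K) - mn (j * K)) := hcontr (j * K)
        _ ≤ (1 - δw) * (1 - δw) ^ j :=
            mul_le_mul_of_nonneg_left ih (by linarith)
        _ = (1 - δw) ^ j * (1 - δw) := by ring
  -- monotone differences
  have hDmono : ∀ k k', k ≤ k' → Mx k' - mn k' ≤ Mx k - mn k := by
    intro k k' hkk
    have h1 : Mx k' ≤ Mx k := by
      have : k' = k + (k' - k) := by omega
      rw [this]; exact hMxmono _ k
    have h2 : mn k ≤ mn k' := by
      have : k' = k + (k' - k) := by omega
      rw [this]; exact hmnmono _ k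
    linarith
  -- a positive value at b
  obtain ⟨ktil, hktilEq⟩ : ∃ k, r + k * h = mstar := by
    refine ⟨mstar / h, ?_⟩
    have := Nat.mod_add_div' mstar h
    omega
  have hfkb : 0 < f ktil b := by
    rw [hf]
    simp only
    rw [hktilEq]
    exact div_pos (by exact_mod_cast hms) (hnp _)
  set δ0 : ℚ := δw * f ktil b with hδ0
  have hδ0pos : 0 < δ0 := mul_pos hδpos hfkb
  have hposmn : ∀ k, ktil + K ≤ k → δ0 ≤ mn k := by
    intro k hk
    have hbase : δ0 ≤ mn (ktil + K) := by
      refine Finset.le_inf' _ _ (fun u hu => ?_)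
      rw [hdec K ktil u (hmemC0 hu)]
      calc δ0 = δw * f ktil b := hδ0
        _ ≤ W K u b * f ktil b :=
            mul_le_mul_of_nonneg_right (hδle u b hu hbC0f) (hf0 _ _)
        _ ≤ ∑ v ∈ C0f, W K u v * f ktil v := by
            refine Finset.single_le_sum (f := fun v => W K u v * f ktil v)
              (fun v _ => mul_nonneg (hW0 K u v) (hf0 _ _)) hbC0f
    calc δ0 ≤ mn (ktil + K) := hbase
      _ ≤ mn k := by
        have : k = (ktil + K) + (k - (ktil + K)) := by omega
        rw [this]; exact hmnmono _ _
  -- final assembly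
  refine ⟨r, δ0, hδ0pos, hsupp0, ?_⟩
  intro ε hε
  obtain ⟨j, hj⟩ := exists_pow_lt_of_lt_one hε (show 1 - δw < 1 by linarith)
  refine ⟨r + (j * K + ktil + K) * h, ?_⟩
  intro m m' hm hm' hmr hm'r
  -- decompose m and m'
  have hdecomp : ∀ mm, r + (j * K + ktil + K) * h ≤ mm → mm ≡ r [MOD h] →
      ∃ km, mm = r + km * h ∧ j * K + ktil + K ≤ km := by
    intro mm hmm hmmr
    have hmmod : mm % h = r := by
      have h1 : mm % h = r % h := hmmr
      rwa [Nat.mod_eq_of_lt hrlt] at h1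
    have h2 := Nat.mod_add_div' mm h
    refine ⟨mm / h, by omega, ?_⟩
    have h3 : (j * K + ktil + K) * h ≤ (mm / h) * h := by omega
    exact Nat.le_of_mul_le_mul_right h3 hh
  obtain ⟨km, hkm, hkmge⟩ := hdecomp m hm hmr
  obtain ⟨km', hkm', hkmge'⟩ := hdecomp m' hm' hm'r
  have hfm : (cnt σ m b t : ℚ) / (n:ℚ) ^ m = f km b := by rw [hkm]
  have hfm' : (cnt σ m' b t : ℚ) / (n:ℚ) ^ m' = f km' b := by rw [hkm']
  constructor
  · rw [hfm]
    exact le_trans (hposmn km (by omega)) (hmnf km b hbC0f)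
  · rw [hfm, hfm']
    have hk0 : j * K ≤ min km km' := by omega
    set k0 := min km km' with hk0def
    have hle1 : k0 ≤ km := min_le_left _ _
    have hle2 : k0 ≤ km' := min_le_right _ _
    have hmono : ∀ kk, k0 ≤ kk → mn k0 ≤ f kk b ∧ f kk b ≤ Mx k0 := by
      intro kk hkk
      have he : kk = k0 + (kk - k0) := by omega
      constructor
      · refine le_trans ?_ (hmnf kk b hbC0f)
        rw [he]; exact hmnmono _ _
      · refine le_trans (hfMx kk b hbC0f) ?_
        conv_lhs => rw [he]
        exact hMxmono _ _
    obtain ⟨ha1, ha2⟩ := hmono km hle1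
    obtain ⟨hb1, hb2⟩ := hmono km' hle2
    have hDk : Mx k0 - mn k0 ≤ (1 - δw) ^ j :=
      le_trans (hDmono (j * K) k0 hk0) (hgeo j)
    rw [abs_le]
    constructor <;> [linarith [le_of_lt hj]; linarith [le_of_lt hj]]

section Reach
variable {S : Type*} [Fintype S] [DecidableEq S] {n : ℕ} (σ : Fin n → S → S)

def Reaches (u v : S) : Prop := ∃ m, 0 < cnt σ m u v

lemma reaches_refl (u : S) : Reaches σ u u := ⟨0, by rw [cnt_zero_self]; omega⟩

lemma reaches_trans {u v w : S} : Reaches σ u v → Reaches σ v w → Reaches σ u w := by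
  rintro ⟨m, hm⟩ ⟨m', hm'⟩
  exact ⟨m + m', cnt_pos_trans σ hm hm'⟩

lemma reaches_step (a : Fin n) {u v : S} : Reaches σ u v → Reaches σ u (σ a v) := by
  rintro ⟨m, hm⟩
  exact ⟨m + 1, cnt_pos_trans σ hm (by rw [cnt_one]; exact Finset.card_pos.2 ⟨a, by simp⟩)⟩

lemma reaches_inv (hσ : ∀ a, Function.Injective (σ a)) (a : Fin n) {u v x : S}
    (hx : σ a x = v) (hv : Reaches σ u v) : Reaches σ u x := by
  classical
  set π : Equiv.Perm S := Equiv.ofBijective (σ a) ((Finite.injective_iff_bijective).1 (hσ a))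
    with hπ
  have happ : ∀ y : S, π y = σ a y := fun y => rfl
  have hiter : ∀ (j : ℕ) (y : S), Reaches σ u y → Reaches σ u ((π ^ j) y) := by
    intro j
    induction j with
    | zero => intro y hy; simpa using hy
    | succ j ih =>
      intro y hy
      have : (π ^ (j + 1)) y = (π ^ j) (π y) := by
        rw [pow_succ, Equiv.Perm.mul_apply]
      rw [this, happ]
      exact ih _ (reaches_step σ a hy)
  set k := orderOf π with hkdef
  have hk : 0 < k := orderOf_pos π
  have hπk : π ^ k = 1 := pow_orderOf_eq_one π
  have hxv : x = (π ^ (k - 1)) v := by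
    have h1 : (π ^ (k - 1)) (π x) = (π ^ k) x := by
      rw [← Equiv.Perm.mul_apply, ← pow_succ]
      congr 2
      omega
    rw [happ, hx] at h1
    rw [h1, hπk]
    rfl
  rw [hxv]
  exact hiter _ _ hv

end Reach

section Helpers

lemma exists_offset (h r m0 : ℕ) (hh : 0 < h) :
    ∃ y, y < h ∧ (m0 + y) ≡ r [MOD h] := by
  refine ⟨(r % h + h - m0 % h) % h, Nat.mod_lt _ hh, ?_⟩
  have h1 : m0 % h < h := Nat.mod_lt _ hh
  calc m0 + (r % h + h - m0 % h) % h
      ≡ m0 % h + (r % h + h - m0 % h) [MOD h] :=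
        Nat.ModEq.add (Nat.mod_modEq m0 h).symm (Nat.mod_modEq _ h)
    _ = r % h + h := by omega
    _ ≡ r + h [MOD h] := Nat.ModEq.add_right h (Nat.mod_modEq r h)
    _ ≡ r + 0 [MOD h] := Nat.ModEq.add_left r (Nat.modEq_zero_iff_dvd.2 dvd_rfl)
    _ = r := by omega

lemma offset_unique {h r m0 y y' : ℕ} (hy : y < h) (hy' : y' < h)
    (h1 : (m0 + y) ≡ r [MOD h]) (h2 : (m0 + y') ≡ r [MOD h]) : y = y' := by
  have h3 : m0 + y ≡ m0 + y' [MOD h] := h1.trans h2.symm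
  have h4 : y ≡ y' [MOD h] := Nat.ModEq.add_left_cancel' m0 h3
  have h5 : y % h = y' % h := h4
  rwa [Nat.mod_eq_of_lt hy, Nat.mod_eq_of_lt hy'] at h5

lemma sum_range_mul {M : Type*} [AddCommMonoid M] (f : ℕ → M) (a bb : ℕ) :
    ∑ x ∈ Finset.range (a * bb), f x
      = ∑ k ∈ Finset.range a, ∑ y ∈ Finset.range bb, f (k * bb + y) := by
  induction a with
  | zero => simp
  | succ a ih =>
    have h1 : (a + 1) * bb = a * bb + bb := by ring
    have h2 : ∑ x ∈ Finset.range (a * bb), f x + ∑ x ∈ Finset.Ico (a * bb) (a * bb + bb), f x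
        = ∑ x ∈ Finset.range ((a+1) * bb), f x := by
      rw [h1, Finset.range_eq_Ico, Finset.range_eq_Ico]
      exact Finset.sum_Ico_consecutive f (Nat.zero_le _) (Nat.le_add_right _ _)
    rw [← h2, ih, Finset.sum_range_succ]
    congr 1
    rw [Finset.sum_Ico_eq_sum_range]
    simp

end Helpers
end NPR

set_option maxHeartbeats 3200000 in
/-- For a coset partition of the free group `F_n`, if a period `hp ℓ > 1` does not
properly divide any other period, then it is repeated. -/
theorem nondividing_period_repeats
    (n s : ℕ) (hn : 1 ≤ n)
    (H : Fin s → Subgroup (FreeGroup (Fin n))) (α : Fin s → FreeGroup (Fin n))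
    (d : Fin s → ℕ) (hd : ∀ i, 1 < d i)
    (hpart : ∀ g : FreeGroup (Fin n), ∃! i : Fin s, g * (α i)⁻¹ ∈ H i)
    (c : (i : Fin s) → FreeGroup (Fin n) → Fin (d i))
    (hcsurj : ∀ i, Function.Surjective (c i))
    (hc : ∀ (i : Fin s) (x y : FreeGroup (Fin n)), c i x = c i y ↔ x * y⁻¹ ∈ H i)
    (A : (i : Fin s) → Matrix (Fin (d i)) (Fin (d i)) ℕ)
    (hA : ∀ (i : Fin s) (p q : Fin (d i)), A i p q =
      Set.ncard {a : Fin n | ∃ g, c i g = p ∧ c i (g * FreeGroup.of a) = q})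
    (hp : Fin s → ℕ)
    (hpdvd : ∀ (i : Fin s) (m : ℕ), 0 < m → 0 < ((A i) ^ m) (c i 1) (c i 1) → hp i ∣ m)
    (hpgcd : ∀ (i : Fin s) (e : ℕ),
      (∀ m : ℕ, 0 < m → 0 < ((A i) ^ m) (c i 1) (c i 1) → e ∣ m) → e ∣ hp i)
    (ℓ : Fin s) (hℓ : 1 < hp ℓ)
    (hnodvd : ∀ i : Fin s, i ≠ ℓ → ¬ (hp ℓ ∣ hp i ∧ hp ℓ ≠ hp i)) :
    ∃ j : Fin s, j ≠ ℓ ∧ hp j = hp ℓ := by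
  classical
  by_contra hgoal
  push_neg at hgoal
  -- hgoal : ∀ j, j ≠ ℓ → hp j ≠ hp ℓ
  have hnd : ∀ j, j ≠ ℓ → ¬ hp ℓ ∣ hp j := by
    intro j hj hdvdj
    exact hnodvd j hj ⟨hdvdj, Ne.symm (hgoal j hj)⟩
  -- set up the deterministic automata
  have hrep : ∀ i (p : Fin (d i)), c i (Function.surjInv (hcsurj i) p) = p :=
    fun i p => Function.surjInv_eq (hcsurj i) p
  set σ : (i : Fin s) → Fin n → Fin (d i) → Fin (d i) :=
    fun i a p => c i (Function.surjInv (hcsurj i) p * FreeGroup.of a) with hσdef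
  have hwd : ∀ i (x : FreeGroup (Fin n)) (a : Fin n),
      c i (x * FreeGroup.of a) = σ i a (c i x) := by
    intro i x a
    apply (hc i _ _).2
    have h1 : (x * FreeGroup.of a) *
        (Function.surjInv (hcsurj i) (c i x) * FreeGroup.of a)⁻¹
        = x * (Function.surjInv (hcsurj i) (c i x))⁻¹ := by group
    rw [h1]
    exact (hc i _ _).1 (by rw [hrep])
  have hσinj : ∀ i (a : Fin n), Function.Injective (σ i a) := by
    intro i a p q hpq
    have h2 := (hc i _ _).1 hpq
    have h3 : (Function.surjInv (hcsurj i) p * FreeGroup.of a) *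
        (Function.surjInv (hcsurj i) q * FreeGroup.of a)⁻¹
        = Function.surjInv (hcsurj i) p * (Function.surjInv (hcsurj i) q)⁻¹ := by group
    rw [h3] at h2
    have h4 := (hc i _ _).2 h2
    rwa [hrep, hrep] at h4
  have hAB : ∀ i, A i = NPR.Bmat (σ i) := by
    intro i
    ext p q
    rw [hA i p q, NPR.Bmat]
    have hset : {a : Fin n | ∃ g, c i g = p ∧ c i (g * FreeGroup.of a) = q}
        = {a : Fin n | σ i a p = q} := by
      ext a
      simp only [Set.mem_setOf_eq]
      constructor
      · rintro ⟨g, hg1, hg2⟩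
        rw [← hg1, ← hwd i g a]; exact hg2
      · intro hσa
        exact ⟨Function.surjInv (hcsurj i) p, hrep i p, by
          rw [hwd i _ a, hrep i p]; exact hσa⟩
    rw [hset, Set.ncard_eq_toFinset_card']
    congr 1
    ext a; simp
  have hcnt : ∀ i (m : ℕ) (p q : Fin (d i)), (A i ^ m) p q = NPR.cnt (σ i) m p q := by
    intro i m p q
    rw [hAB i]; rfl
  -- reachability
  have hreach : ∀ i (u v : Fin (d i)), ∃ m, 0 < NPR.cnt (σ i) m u v := by
    intro i u v
    have key : ∀ w : FreeGroup (Fin n), ∀ g, NPR.Reaches (σ i) (c i g) (c i (g * w)) := by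
      intro w
      refine FreeGroup.induction_on
        (C := fun w => ∀ g, NPR.Reaches (σ i) (c i g) (c i (g * w))) w ?_ ?_ ?_ ?_
      · intro g; rw [mul_one]; exact NPR.reaches_refl _ _
      · intro x g
        have : c i (g * FreeGroup.of x) = σ i x (c i g) := hwd i g x
        rw [this]
        exact NPR.reaches_step _ x (NPR.reaches_refl _ _)
      · intro x _ g
        refine NPR.reaches_inv (σ i) (hσinj i) x ?_ (NPR.reaches_refl _ (c i g))
        rw [← hwd i _ x]
        congr 1
        group
      · intro x w2 hxr hyr g
        have h1 := hxr g
        have h2 := hyr (g * x)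
        rw [← mul_assoc]
        exact NPR.reaches_trans _ h1 h2
    obtain ⟨gu, hgu⟩ := hcsurj i u
    obtain ⟨gv, hgv⟩ := hcsurj i v
    have h3 := key (gu⁻¹ * gv) gu
    rw [mul_inv_cancel_left] at h3
    rw [← hgu, ← hgv]
    exact h3
  -- apply the abstract block lemma
  have hblock := fun i => NPR.block_main (σ i) hn (hreach i) (c i 1) (c i (α i)) (hp i)
      (fun m hm hpos => hpdvd i m hm (by rw [hcnt i]; exact hpos))
      (fun e he => hpgcd i e (fun m hm hpos => he m hm (by rw [← hcnt i]; exact hpos)))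
  choose r δq hδpos hsupp hmain using hblock
  -- periods are positive
  have hppos : ∀ i, 0 < hp i := by
    intro i
    obtain ⟨m2, hm2⟩ := hreach i (σ i ⟨0, hn⟩ (c i 1)) (c i 1)
    have h1 : 0 < NPR.cnt (σ i) (1 + m2) (c i 1) (c i 1) :=
      NPR.cnt_pos_trans _ (NPR.cnt_one_pos _ _ _) hm2
    have h2 := hpdvd i (1 + m2) (by omega) (by rw [hcnt i]; exact h1)
    rcases Nat.eq_zero_or_pos (hp i) with h0 | h0
    · rw [h0] at h2
      have := Nat.eq_zero_of_zero_dvd h2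
      omega
    · exact h0
  -- the partition identity
  have hone : ∀ m : ℕ,
      ∑ j : Fin s, ((NPR.cnt (σ j) m (c j 1) (c j (α j)) : ℚ) / (n:ℚ) ^ m) = 1 := by
    intro m
    have hrun : ∀ j (l : List (Fin n)) (g : FreeGroup (Fin n)),
        c j (g * (l.map FreeGroup.of).prod) = NPR.runw (σ j) (c j g) l := by
      intro j l
      induction l with
      | nil => intro g; simp [NPR.runw]
      | cons a l ih =>
        intro g
        rw [NPR.runw_cons, ← hwd j g a, ← ih (g * FreeGroup.of a)]
        congr 1
        rw [List.map_cons, List.prod_cons, ← mul_assoc]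
    have huniq : ∀ w : Fin m → Fin n,
        #(Finset.univ.filter
          (fun j => NPR.runw (σ j) (c j 1) (List.ofFn w) = c j (α j))) = 1 := by
      intro w
      obtain ⟨i0, hi0, hi0u⟩ := hpart (((List.ofFn w).map FreeGroup.of).prod)
      have hmem : ∀ j, (NPR.runw (σ j) (c j 1) (List.ofFn w) = c j (α j)) ↔ j = i0 := by
        intro j
        have h1 : NPR.runw (σ j) (c j 1) (List.ofFn w)
            = c j (((List.ofFn w).map FreeGroup.of).prod) := by
          rw [← hrun j (List.ofFn w) 1, one_mul]
        constructor
        · intro hj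
          exact hi0u j ((hc j _ _).1 (h1.symm.trans hj).symm.symm)
        · rintro rfl
          rw [h1]
          exact (hc j _ _).2 hi0
      rw [Finset.card_eq_one]
      refine ⟨i0, ?_⟩
      ext j
      simp [hmem j]
    have hcount : ∑ j : Fin s, NPR.cnt (σ j) m (c j 1) (c j (α j)) = n ^ m := by
      calc ∑ j : Fin s, NPR.cnt (σ j) m (c j 1) (c j (α j))
          = ∑ j : Fin s, #(Finset.univ.filter
              (fun w : Fin m → Fin n => NPR.runw (σ j) (c j 1) (List.ofFn w) = c j (α j))) :=
            Finset.sum_congr rfl (fun j _ => NPR.cnt_words (σ j) m _ _)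
        _ = ∑ j : Fin s, ∑ w : Fin m → Fin n,
              if NPR.runw (σ j) (c j 1) (List.ofFn w) = c j (α j) then 1 else 0 :=
            Finset.sum_congr rfl (fun j _ => Finset.card_filter _ _)
        _ = ∑ w : Fin m → Fin n, ∑ j : Fin s,
              if NPR.runw (σ j) (c j 1) (List.ofFn w) = c j (α j) then 1 else 0 :=
            Finset.sum_comm
        _ = ∑ _w : Fin m → Fin n, 1 := by
            refine Finset.sum_congr rfl (fun w _ => ?_)
            rw [← Finset.card_filter]
            exact huniq w
        _ = n ^ m := by
            simp [Finset.card_univ, Fintype.card_fun]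
    rw [← Finset.sum_div, div_eq_one_iff_eq
      (ne_of_gt (pow_pos (show (0:ℚ) < n by exact_mod_cast hn) m))]
    exact_mod_cast hcount
  -- numeric setup
  set L := ∏ j : Fin s, hp j with hLdef
  have hLdvd : ∀ j, hp j ∣ L := fun j => Finset.dvd_prod_of_mem hp (Finset.mem_univ j)
  have hLpos : 0 < L := Finset.prod_pos (fun j _ => hppos j)
  have hLh : hp ℓ ∣ L := hLdvd ℓ
  have hLhmul : (L / hp ℓ) * hp ℓ = L := Nat.div_mul_cancel hLh
  have hLhpos : 0 < L / hp ℓ := by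
    rcases Nat.eq_zero_or_pos (L / hp ℓ) with h0 | h0
    · rw [h0] at hLhmul; simp at hLhmul; omega
    · exact h0
  have hδ0pos : 0 < δq ℓ := hδpos ℓ
  have hspos : (0:ℚ) < ((s * L * hp ℓ : ℕ) : ℚ) + 1 := by positivity
  set ε : ℚ := δq ℓ / (((s * L * hp ℓ : ℕ) : ℚ) + 1) with hεdef
  have hεpos : 0 < ε := div_pos hδ0pos hspos
  choose T hT using fun j => hmain j ε hεpos
  set m0 := Finset.univ.sup T with hm0def
  have hm0ge : ∀ j, T j ≤ m0 := fun j => Finset.le_sup (Finset.mem_univ j)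
  choose y hylt hymod using fun j => NPR.exists_offset (hp j) (r j) m0 (hppos j)
  have hcong_off : ∀ j (k : ℕ), (m0 + (k * hp j + y j)) ≡ r j [MOD hp j] := by
    intro j k
    have h1 : (m0 + (k * hp j + y j)) ≡ (m0 + y j) [MOD hp j] := by
      calc m0 + (k * hp j + y j) = (m0 + y j) + k * hp j := by ring
        _ ≡ (m0 + y j) + 0 [MOD hp j] :=
            Nat.ModEq.add_left _ (Nat.modEq_zero_iff_dvd.2 (dvd_mul_left _ _))
        _ = m0 + y j := by ring
    exact h1.trans (hymod j)
  -- root of unity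
  have hhne : hp ℓ ≠ 0 := by have := hppos ℓ; omega
  set ω : ℂ := Complex.exp (2 * Real.pi * Complex.I / (hp ℓ)) with hωdef
  have hωprim : IsPrimitiveRoot ω (hp ℓ) := Complex.isPrimitiveRoot_exp _ hhne
  have hωL : ω ^ L = 1 := (hωprim.pow_eq_one_iff_dvd L).2 hLh
  have hωne1 : ω ≠ 1 := hωprim.ne_one hℓ
  have hgeom : ∑ x ∈ Finset.range L, ω ^ x = 0 := by
    rw [geom_sum_eq hωne1, hωL]; simp
  have habsω : ‖ω‖ = 1 := by
    have h1 : ‖ω‖ ^ (hp ℓ) = 1 := by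
      rw [← norm_pow, hωprim.pow_eq_one]; simp
    rcases lt_trichotomy (‖ω‖) 1 with hlt | heq | hgt
    · have := pow_lt_one₀ (norm_nonneg _) hlt hhne; linarith
    · exact heq
    · have := one_lt_pow₀ hgt hhne; linarith
  have habsQ : ∀ q : ℚ, ‖((q : ℚ) : ℂ)‖ = ((|q| : ℚ) : ℝ) := by
    intro q
    rw [show ((q:ℚ):ℂ) = (((q:ℝ)):ℂ) by push_cast; ring, Complex.norm_real, Real.norm_eq_abs, Rat.cast_abs]
  -- total sum is zero
  have hzero : ∑ j : Fin s, (∑ x ∈ Finset.range L,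
      ω ^ x * ((NPR.cnt (σ j) (m0 + x) (c j 1) (c j (α j)) : ℚ) / (n:ℚ) ^ (m0 + x) : ℚ)) = 0 := by
    rw [Finset.sum_comm]
    calc ∑ x ∈ Finset.range L, ∑ j : Fin s,
          ω ^ x * ((NPR.cnt (σ j) (m0 + x) (c j 1) (c j (α j)) : ℚ) / (n:ℚ) ^ (m0 + x) : ℚ)
        = ∑ x ∈ Finset.range L, ω ^ x := by
          refine Finset.sum_congr rfl (fun x _ => ?_)
          rw [← Finset.mul_sum]
          have h1 : ∑ j : Fin s,
              (((NPR.cnt (σ j) (m0 + x) (c j 1) (c j (α j)) : ℚ) / (n:ℚ) ^ (m0 + x) : ℚ) : ℂ)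
              = 1 := by
            exact_mod_cast congrArg (fun q : ℚ => (q : ℂ)) (hone (m0 + x))
          rw [h1, mul_one]
      _ = 0 := hgeom
  -- rewrite each term
  have hterm : ∀ j : Fin s, (∑ x ∈ Finset.range L,
      ω ^ x * ((NPR.cnt (σ j) (m0 + x) (c j 1) (c j (α j)) : ℚ) / (n:ℚ) ^ (m0 + x) : ℚ))
      = ω ^ (y j) * ∑ k ∈ Finset.range (L / hp j), (ω ^ (hp j)) ^ k *
        ((NPR.cnt (σ j) (m0 + (k * hp j + y j)) (c j 1) (c j (α j)) : ℚ)
          / (n:ℚ) ^ (m0 + (k * hp j + y j)) : ℚ) := by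
    intro j
    have hLj : L = (L / hp j) * hp j := (Nat.div_mul_cancel (hLdvd j)).symm
    conv_lhs => rw [hLj]
    rw [NPR.sum_range_mul
      (fun x => ω ^ x * ((NPR.cnt (σ j) (m0 + x) (c j 1) (c j (α j)) : ℚ)
        / (n:ℚ) ^ (m0 + x) : ℚ)) (L / hp j) (hp j)]
    rw [Finset.mul_sum]
    refine Finset.sum_congr rfl (fun k _ => ?_)
    rw [Finset.sum_eq_single (y j)]
    · conv_lhs => rw [pow_add]
      rw [pow_mul']
      ring
    · intro y' hyr hy'
      have hnc : ¬ (m0 + (k * hp j + y')) ≡ r j [MOD hp j] := by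
        intro hcon
        have h1 : (m0 + (k * hp j + y')) ≡ (m0 + y') [MOD hp j] := by
          calc m0 + (k * hp j + y') = (m0 + y') + k * hp j := by ring
            _ ≡ (m0 + y') + 0 [MOD hp j] :=
                Nat.ModEq.add_left _ (Nat.modEq_zero_iff_dvd.2 (dvd_mul_left _ _))
            _ = m0 + y' := by ring
        have h2 : (m0 + y') ≡ r j [MOD hp j] := h1.symm.trans hcon
        exact hy' (NPR.offset_unique (Finset.mem_range.1 hyr) (hylt j) h2 (hymod j))
      rw [hsupp j _ hnc]
      simp
    · intro hmem
      exact absurd (Finset.mem_range.2 (hylt j)) hmem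
  -- bound for j ≠ ℓ
  have hbound : ∀ j : Fin s, j ≠ ℓ → ‖∑ x ∈ Finset.range L,
      ω ^ x * ((NPR.cnt (σ j) (m0 + x) (c j 1) (c j (α j)) : ℚ) / (n:ℚ) ^ (m0 + x) : ℚ)‖
      ≤ (L : ℝ) * (ε : ℝ) := by
    intro j hj
    rw [hterm j, norm_mul, norm_pow, habsω, one_pow, one_mul]
    have hβne : (ω ^ hp j) ≠ 1 := by
      intro hβ1
      exact hnd j hj ((hωprim.pow_eq_one_iff_dvd (hp j)).1 hβ1)
    have hβL : (ω ^ hp j) ^ (L / hp j) = 1 := by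
      rw [← pow_mul, Nat.mul_div_cancel' (hLdvd j)]
      exact hωL
    have hβsum : ∑ k ∈ Finset.range (L / hp j), (ω ^ hp j) ^ k = 0 := by
      rw [geom_sum_eq hβne, hβL]; simp
    set q : ℕ → ℚ := fun k =>
      ((NPR.cnt (σ j) (m0 + (k * hp j + y j)) (c j 1) (c j (α j)) : ℚ)
        / (n:ℚ) ^ (m0 + (k * hp j + y j))) with hq
    have hsplit : ∑ k ∈ Finset.range (L / hp j), (ω ^ hp j) ^ k * (q k : ℂ)
        = ∑ k ∈ Finset.range (L / hp j), (ω ^ hp j) ^ k * ((q k : ℂ) - (q 0 : ℂ)) := by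
      rw [Finset.sum_congr rfl (fun k _ => (mul_sub ((ω ^ hp j) ^ k) (q k : ℂ) (q 0 : ℂ)))]
      rw [Finset.sum_sub_distrib, ← Finset.sum_mul, hβsum, zero_mul, sub_zero]
    rw [hsplit]
    refine le_trans (norm_sum_le _ _) ?_
    have hptw : ∀ k ∈ Finset.range (L / hp j),
        ‖(ω ^ hp j) ^ k * ((q k : ℂ) - (q 0 : ℂ))‖ ≤ (ε : ℝ) := by
      intro k _
      rw [norm_mul]
      have h1 : ‖(ω ^ hp j) ^ k‖ = 1 := by
        rw [← pow_mul, norm_pow, habsω, one_pow]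
      rw [h1, one_mul]
      have h2 : ((q k : ℂ) - (q 0 : ℂ)) = ((q k - q 0 : ℚ) : ℂ) := by push_cast; ring
      rw [h2, habsQ]
      have h3 := (hT j (m0 + (k * hp j + y j)) (m0 + (0 * hp j + y j))
        (by have := hm0ge j; omega) (by have := hm0ge j; omega)
        (hcong_off j k) (hcong_off j 0)).2
      have h4 : |q k - q 0| ≤ ε := h3
      exact_mod_cast h4
    calc ∑ k ∈ Finset.range (L / hp j), ‖(ω ^ hp j) ^ k * ((q k : ℂ) - (q 0 : ℂ))‖
        ≤ ∑ _k ∈ Finset.range (L / hp j), (ε : ℝ) := Finset.sum_le_sum hptw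
      _ = ((L / hp j : ℕ) : ℝ) * (ε : ℝ) := by
          rw [Finset.sum_const, Finset.card_range, nsmul_eq_mul]
      _ ≤ (L : ℝ) * (ε : ℝ) := by
          have h5 : (L / hp j : ℕ) ≤ L := Nat.div_le_self _ _
          have h6 : (0:ℝ) ≤ (ε : ℝ) := by exact_mod_cast le_of_lt hεpos
          have h7 : ((L / hp j : ℕ) : ℝ) ≤ (L : ℝ) := by exact_mod_cast h5
          nlinarith
  -- lower bound for ℓ
  have hlow : ((L / hp ℓ : ℕ) : ℝ) * ((δq ℓ : ℚ) : ℝ) ≤ ‖∑ x ∈ Finset.range L,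
        ω ^ x * ((NPR.cnt (σ ℓ) (m0 + x) (c ℓ 1) (c ℓ (α ℓ)) : ℚ) / (n:ℚ) ^ (m0 + x) : ℚ)‖ := by
    rw [hterm ℓ, norm_mul, norm_pow, habsω, one_pow, one_mul]
    have hβ1 : ω ^ hp ℓ = 1 := hωprim.pow_eq_one
    have hsum : ∑ k ∈ Finset.range (L / hp ℓ), (ω ^ hp ℓ) ^ k *
        ((NPR.cnt (σ ℓ) (m0 + (k * hp ℓ + y ℓ)) (c ℓ 1) (c ℓ (α ℓ)) : ℚ)
          / (n:ℚ) ^ (m0 + (k * hp ℓ + y ℓ)) : ℚ)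
        = ((∑ k ∈ Finset.range (L / hp ℓ),
            ((NPR.cnt (σ ℓ) (m0 + (k * hp ℓ + y ℓ)) (c ℓ 1) (c ℓ (α ℓ)) : ℚ)
              / (n:ℚ) ^ (m0 + (k * hp ℓ + y ℓ)) : ℚ) : ℚ) : ℂ) := by
      push_cast
      refine Finset.sum_congr rfl (fun k _ => ?_)
      rw [hβ1, one_pow, one_mul]
    rw [hsum, habsQ]
    have hql : ((L / hp ℓ : ℕ) : ℚ) * δq ℓ ≤ ∑ k ∈ Finset.range (L / hp ℓ),
        ((NPR.cnt (σ ℓ) (m0 + (k * hp ℓ + y ℓ)) (c ℓ 1) (c ℓ (α ℓ)) : ℚ)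
          / (n:ℚ) ^ (m0 + (k * hp ℓ + y ℓ)) : ℚ) := by
      calc ((L / hp ℓ : ℕ) : ℚ) * δq ℓ
          = ∑ _k ∈ Finset.range (L / hp ℓ), δq ℓ := by
            rw [Finset.sum_const, Finset.card_range, nsmul_eq_mul]
        _ ≤ _ := by
            refine Finset.sum_le_sum (fun k _ => ?_)
            exact (hT ℓ (m0 + (k * hp ℓ + y ℓ)) (m0 + (k * hp ℓ + y ℓ))
              (by have := hm0ge ℓ; omega) (by have := hm0ge ℓ; omega)
              (hcong_off ℓ k) (hcong_off ℓ k)).1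
    have habs2 : (((L / hp ℓ : ℕ) : ℚ) * δq ℓ : ℚ) ≤
        |∑ k ∈ Finset.range (L / hp ℓ),
        ((NPR.cnt (σ ℓ) (m0 + (k * hp ℓ + y ℓ)) (c ℓ 1) (c ℓ (α ℓ)) : ℚ)
          / (n:ℚ) ^ (m0 + (k * hp ℓ + y ℓ)) : ℚ)| :=
      le_trans hql (le_abs_self _)
    calc ((L / hp ℓ : ℕ) : ℝ) * ((δq ℓ : ℚ) : ℝ)
        = ((((L / hp ℓ : ℕ) : ℚ) * δq ℓ : ℚ) : ℝ) := by push_cast; ring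
      _ ≤ _ := by exact_mod_cast habs2
  -- combine
  have hsplit2 := Finset.add_sum_erase Finset.univ (fun j => ∑ x ∈ Finset.range L,
      ω ^ x * ((NPR.cnt (σ j) (m0 + x) (c j 1) (c j (α j)) : ℚ) / (n:ℚ) ^ (m0 + x) : ℚ))
      (Finset.mem_univ ℓ)
  have htermℓ : (∑ x ∈ Finset.range L,
      ω ^ x * ((NPR.cnt (σ ℓ) (m0 + x) (c ℓ 1) (c ℓ (α ℓ)) : ℚ) / (n:ℚ) ^ (m0 + x) : ℚ))
      = - ∑ j ∈ Finset.univ.erase ℓ, (∑ x ∈ Finset.range L,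
      ω ^ x * ((NPR.cnt (σ j) (m0 + x) (c j 1) (c j (α j)) : ℚ) / (n:ℚ) ^ (m0 + x) : ℚ)) := by
    have h1 := hsplit2.trans hzero
    linear_combination h1
  have hup : ‖∑ x ∈ Finset.range L,
      ω ^ x * ((NPR.cnt (σ ℓ) (m0 + x) (c ℓ 1) (c ℓ (α ℓ)) : ℚ) / (n:ℚ) ^ (m0 + x) : ℚ)‖
      ≤ (s : ℝ) * ((L : ℝ) * (ε : ℝ)) := by
    rw [htermℓ, norm_neg]
    refine le_trans (norm_sum_le _ _) ?_
    calc ∑ j ∈ Finset.univ.erase ℓ, ‖∑ x ∈ Finset.range L,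
          ω ^ x * ((NPR.cnt (σ j) (m0 + x) (c j 1) (c j (α j)) : ℚ) / (n:ℚ) ^ (m0 + x) : ℚ)‖
        ≤ ∑ _j ∈ Finset.univ.erase ℓ, (L : ℝ) * (ε : ℝ) := by
          refine Finset.sum_le_sum (fun j hjm => ?_)
          exact hbound j (Finset.mem_erase.1 hjm).1
      _ = ((Finset.univ.erase ℓ).card : ℝ) * ((L : ℝ) * (ε : ℝ)) := by
          rw [Finset.sum_const, nsmul_eq_mul]
      _ ≤ (s : ℝ) * ((L : ℝ) * (ε : ℝ)) := by
          have h1 : (Finset.univ.erase ℓ).card ≤ s := by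
            calc (Finset.univ.erase ℓ).card ≤ Finset.univ.card := Finset.card_erase_le
              _ = s := by simp
          have h2 : (0:ℝ) ≤ (L : ℝ) * (ε : ℝ) := by
            have : (0:ℝ) ≤ (ε : ℝ) := by exact_mod_cast le_of_lt hεpos
            positivity
          have h3 : ((Finset.univ.erase ℓ).card : ℝ) ≤ (s : ℝ) := by exact_mod_cast h1
          nlinarith
  -- the strict inequality
  have hs1 : 1 ≤ s := by
    have := ℓ.pos
    omega
  have hnat : s * L < (L / hp ℓ) * (s * L * hp ℓ + 1) := by
    have e1 : (L / hp ℓ) * (s * L * hp ℓ + 1) = s * L * ((L / hp ℓ) * hp ℓ) + L / hp ℓ := by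
      ring
    rw [e1, hLhmul]
    have hL2 : 2 ≤ L := le_trans hℓ (Nat.le_of_dvd hLpos hLh)
    have h4 : s * L * 2 ≤ s * L * L := Nat.mul_le_mul_left (s * L) hL2
    have h5 : 1 ≤ s * L := Nat.one_le_iff_ne_zero.2 (by positivity)
    omega
  have hkey : (s : ℚ) * ((L : ℚ) * ε) < ((L / hp ℓ : ℕ) : ℚ) * δq ℓ := by
    rw [hεdef]
    rw [show (s : ℚ) * ((L : ℚ) * (δq ℓ / (((s * L * hp ℓ : ℕ) : ℚ) + 1)))
      = ((s : ℚ) * (L : ℚ) * δq ℓ) / (((s * L * hp ℓ : ℕ) : ℚ) + 1) by ring]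
    rw [div_lt_iff₀ hspos]
    push_cast
    have hnatQ : (s:ℚ) * (L:ℚ) < ((L / hp ℓ : ℕ) : ℚ) * ((s:ℚ) * (L:ℚ) * ((hp ℓ : ℕ) : ℚ) + 1) := by
      exact_mod_cast hnat
    nlinarith [mul_lt_mul_of_pos_right hnatQ hδ0pos]
  -- contradiction
  have hkeyR : (s : ℝ) * ((L : ℝ) * (ε : ℝ)) < ((L / hp ℓ : ℕ) : ℝ) * ((δq ℓ : ℚ) : ℝ) := by
    exact_mod_cast hkey
  linarith [le_trans hlow hup]
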